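/- arXiv:math/9910158 — 2 statements merged into one kernel-verified Lean document; each statement's English description precedes it below -/
import Mathlib

section
/- Multidimensional Hales–Jewett via alphabet powers: let Λ be a finite nonempty alphabet, m ≥ 1, and c a number of colors. Let k be any number of coordinates such that every c-coloring of functions from a k-element set into the alphabet Λ^m (= the set of functions {0,…,m−1} → Λ) admits a monochromatic combinatorial line. Then every c-coloring of functions from an (m·k)-element set into Λ admits a monochromatic m-dimensional combinatorial subspace: there exist pairwise disjoint nonempty sets M₀,…,M₋₁ ⊆ [m·k] and a function η* from the remaining coordinates to Λ such that all extensions of η* that are constant on each M_ℓ receive the same color. In particular HJ_Λ(m,c) ≤ m · HJ_{Λ^m}(1,c), so the multidimensional Hales–Jewett number HJ_Λ(m,c) is finite. -/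
/-- The point of an `m`-dimensional combinatorial subspace of `Fin k → Λ` determined by
blocks `B` (with `B i = some ℓ` meaning `i` lies in the `ℓ`-th moving block and
`B i = none` meaning `i` is a fixed coordinate with value `η i`), at block-values `v`. -/
def subspacePoint {Λ : Type*} {k m : ℕ} (B : Fin k → Option (Fin m)) (η : Fin k → Λ)
    (v : Fin m → Λ) : Fin k → Λ :=
  fun i => (B i).elim (η i) v

/-- A coloring `d` admits a fully monochromatic `m`-dimensional combinatorial subspace:
pairwise disjoint nonempty moving blocks (encoded by `B`) and a fixed part `η`
such that all points of the subspace get the same color. -/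
def HasMonoSubspace (Λ : Type*) {k : ℕ} (m : ℕ) {c : ℕ} (d : (Fin k → Λ) → Fin c) : Prop :=
  ∃ (B : Fin k → Option (Fin m)) (η : Fin k → Λ),
    (∀ ℓ : Fin m, ∃ i : Fin k, B i = some ℓ) ∧
    ∀ v w : Fin m → Λ, d (subspacePoint B η v) = d (subspacePoint B η w)

/-- Multidimensional Hales–Jewett via alphabet powers: if every `c`-coloring of
`Fin k → (Fin m → Λ)` has a monochromatic combinatorial line, then every `c`-coloring of
`Fin (m * k) → Λ` has a monochromatic `m`-dimensional combinatorial subspace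
(so `HJ_Λ(m,c) ≤ m · HJ_{Λ^m}(1,c)`). -/
theorem multidim_hales_jewett_via_power (Λ : Type*) [Fintype Λ] [Nonempty Λ]
    (m c k : ℕ) (hm : 1 ≤ m)
    (hline : ∀ d : (Fin k → (Fin m → Λ)) → Fin c, HasMonoSubspace (Fin m → Λ) 1 d) :
    ∀ d : (Fin (m * k) → Λ) → Fin c, HasMonoSubspace Λ m d := by
  intro d
  have e : Fin m × Fin k ≃ Fin (m * k) := finProdFinEquiv
  set d' : (Fin k → (Fin m → Λ)) → Fin c :=
    fun y => d (fun i => y (e.symm i).2 (e.symm i).1) with hd'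
  obtain ⟨B', η', hne, hmono⟩ := hline d'
  refine ⟨fun i => (B' (e.symm i).2).elim none (fun _ => some (e.symm i).1),
    fun i => η' (e.symm i).2 (e.symm i).1, ?_, ?_⟩
  · intro ℓ
    obtain ⟨j, hj⟩ := hne 0
    exact ⟨e (ℓ, j), by simp [hj]⟩
  · intro v w
    have key : ∀ v : Fin m → Λ,
        d (subspacePoint (fun i => (B' (e.symm i).2).elim none (fun _ => some (e.symm i).1))
            (fun i => η' (e.symm i).2 (e.symm i).1) v)
          = d' (subspacePoint B' η' (fun _ => v)) := by
      intro v
      rw [hd']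
      congr 1
      funext i
      simp only [subspacePoint]
      cases h : B' (e.symm i).2 <;> simp [h]
    rw [key v, key w]
    exact hmono _ _
end

section
/- Gallai-type configuration theorem: for every finite nonempty set S and every number of colors r there exists N such that for every r-coloring d of the set of functions v : S → {0,1,…,N−1} there exist v* : S → {0,…,N−1} and d* > 0 with v*(s) + d* ≤ N−1 for all s ∈ S, such that the set consisting of v* together with all the functions v*_α (for α ∈ S) — where v*_α agrees with v* except v*_α(α) = v*(α) + d* — is monochromatic. -/
/-- Gallai-type configuration theorem: for every finite nonempty `S` and number of colors
`r` there is `N` such that every `r`-coloring of functions `S → Fin N` admits `v*` and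
`d* > 0`, with `v* s + d* ≤ N - 1` for all `s`, such that `v*` together with all the
functions `v*_α = v* + d*·e_α` (for `α ∈ S`) is monochromatic. -/
theorem gallai_configuration (S : Type) [Fintype S] [Nonempty S] [DecidableEq S] (r : ℕ) :
    ∃ N : ℕ, ∀ d : (S → Fin N) → Fin r,
      ∃ (v : S → ℕ) (dstar : ℕ) (hd : 0 < dstar) (hb : ∀ s : S, v s + dstar ≤ N - 1),
        ∀ α : S,
          d (fun s => ⟨v s + (if s = α then dstar else 0),
              by have h1 := hb s; split <;> omega⟩) =
          d (fun s => ⟨v s, by have h1 := hb s; omega⟩) := by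
  obtain ⟨ι, _inst, hι⟩ := Combinatorics.Line.exists_mono_in_high_dimension (Option S) (Fin r)
  refine ⟨Fintype.card ι + 1, fun d => ?_⟩
  have hle : ∀ (x : ι → Option S) (s : S),
      (Finset.univ.filter (fun i => x i = some s)).card < Fintype.card ι + 1 := by
    intro x s
    have := Finset.card_filter_le (Finset.univ : Finset ι) (fun i => x i = some s)
    simp only [Finset.card_univ] at this
    omega
  set C : (ι → Option S) → Fin r := fun x =>
    d (fun s => ⟨(Finset.univ.filter (fun i => x i = some s)).card, hle x s⟩) with hC
  obtain ⟨l, c, hl⟩ := hι C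
  classical
  set v : S → ℕ := fun s => (Finset.univ.filter (fun i => l.idxFun i = some (some s))).card
    with hv
  set dstar : ℕ := (Finset.univ.filter (fun i => l.idxFun i = none)).card with hds
  have hd : 0 < dstar := by
    obtain ⟨i, hi⟩ := l.proper
    exact Finset.card_pos.mpr ⟨i, by simp [hi]⟩
  have hdisj : ∀ s : S, Disjoint
      (Finset.univ.filter (fun i => l.idxFun i = some (some s)))
      (Finset.univ.filter (fun i => l.idxFun i = none)) := by
    intro s
    refine Finset.disjoint_left.mpr ?_
    intro i h1 h2
    simp_all
  have hb : ∀ s : S, v s + dstar ≤ Fintype.card ι + 1 - 1 := by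
    intro s
    have := Finset.card_union_of_disjoint (hdisj s)
    have hle2 : ((Finset.univ.filter (fun i => l.idxFun i = some (some s))) ∪
        (Finset.univ.filter (fun i => l.idxFun i = none))).card ≤ Fintype.card ι := by
      rw [← Finset.card_univ]
      exact Finset.card_le_card (Finset.subset_univ _)
    have hvv : v s = (Finset.univ.filter (fun i => l.idxFun i = some (some s))).card := rfl
    simp only [Nat.add_sub_cancel]
    rw [hvv]
    omega
  have key : ∀ (a : Option S) (s : S),
      (Finset.univ.filter (fun i => (l.idxFun i).getD a = some s)).card
        = v s + (if a = some s then dstar else 0) := by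
    intro a s
    have hiff : ∀ i : ι, ((l.idxFun i).getD a = some s) ↔
        (l.idxFun i = some (some s) ∨ (l.idxFun i = none ∧ a = some s)) := by
      intro i
      cases h : l.idxFun i <;> simp
    rw [Finset.filter_congr (fun i _ => by rw [hiff i])]
    have hdisj2 : Disjoint (Finset.univ.filter (fun i => l.idxFun i = some (some s)))
        (Finset.univ.filter (fun i => l.idxFun i = none ∧ a = some s)) := by
      refine Finset.disjoint_left.mpr ?_
      intro i h1 h2
      simp_all
    rw [Finset.filter_or, Finset.card_union_of_disjoint hdisj2]
    have h2 : (Finset.univ.filter (fun i => l.idxFun i = none ∧ a = some s)).card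
        = if a = some s then dstar else 0 := by
      by_cases ha : a = some s
      · simp [ha, hds]
      · simp [ha]
    rw [h2]
  have hcl : ∀ a : Option S, C (l a) = c := hl
  refine ⟨v, dstar, hd, hb, fun α => ?_⟩
  have h1 : d (fun s => ⟨v s + (if s = α then dstar else 0),
      by have h1 := hb s; split <;> omega⟩) = C (l (some α)) := by
    rw [hC]
    congr 1
    funext s
    apply Fin.ext
    show v s + (if s = α then dstar else 0)
      = (Finset.univ.filter (fun i => (l.idxFun i).getD (some α) = some s)).card
    rw [key (some α) s]
    by_cases h : s = α <;> simp [h] <;> tauto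
  have h2 : d (fun s => ⟨v s, by have h1 := hb s; omega⟩) = C (l none) := by
    rw [hC]
    congr 1
    funext s
    apply Fin.ext
    show v s = (Finset.univ.filter (fun i => (l.idxFun i).getD none = some s)).card
    rw [key none s]
    simp
  rw [h1, h2, hcl, hcl]
end
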